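/- Let μ1, μ2 ∈ ℂ with μ1 ∉ ℤ, (μ1+μ2)/2 ∉ ℤ and (μ1−μ2)/2 ∉ ℤ, and let k2, k3, k4 ≥ 0 be integers. Then both series ∑_{k1=0}^∞ ((−1)^{k1}/k1!) · Γ(μ1−k1) · Γ((−μ1−μ2)/2 + k1 + k2 − k3) · Γ((−μ1+μ2)/2 + k1 − k2 − k4) and ∑_{k1=0}^∞ ((−1)^{k1}/k1!) · Γ(−μ1−k1) · Γ((μ1−μ2)/2 + k1 + k2 − k3) · Γ((μ1+μ2)/2 + k1 − k2 − k4) converge absolutely, and their sum vanishes: ∑_{k1=0}^∞ ((−1)^{k1}/k1!) · [ Γ(μ1−k1)·Γ((−μ1−μ2)/2+k1+k2−k3)·Γ((−μ1+μ2)/2+k1−k2−k4) + Γ(−μ1−k1)·Γ((μ1−μ2)/2+k1+k2−k3)·Γ((μ1+μ2)/2+k1−k2−k4) ] = 0. -/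

import Mathlib

noncomputable section

open Complex Filter Finset Topology

/-- `pk z k = z (z+1) ⋯ (z+k-1)`. -/
def pk (z : ℂ) (k : ℕ) : ℂ := ∏ j ∈ Finset.range k, (z + j)

/-- `z` is not an integer. -/
def NonInt (z : ℂ) : Prop := ∀ n : ℤ, z ≠ (n : ℂ)

namespace NonInt

lemma add_int {z : ℂ} (h : NonInt z) (m : ℤ) : NonInt (z + m) := by
  intro n hn
  exact h (n - m) (by push_cast; linear_combination hn)

lemma add_nat {z : ℂ} (h : NonInt z) (m : ℕ) : NonInt (z + m) := by
  have := h.add_int m; simpa using this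

lemma add_one {z : ℂ} (h : NonInt z) : NonInt (z + 1) := by
  have := h.add_int 1; simpa using this

lemma neg {z : ℂ} (h : NonInt z) : NonInt (-z) := by
  intro n hn
  exact h (-n) (by push_cast; linear_combination -hn)

lemma ne_zero {z : ℂ} (h : NonInt z) : z ≠ 0 := by simpa using h 0

lemma add_nat_ne_zero {z : ℂ} (h : NonInt z) (m : ℕ) : z + m ≠ 0 := (h.add_nat m).ne_zero

lemma gamma_ne_zero {z : ℂ} (h : NonInt z) : Complex.Gamma z ≠ 0 := by
  refine Complex.Gamma_ne_zero fun m => ?_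
  intro hm
  exact h (-m) (by push_cast at hm ⊢; linear_combination hm)

end NonInt

lemma pk_zero (z : ℂ) : pk z 0 = 1 := rfl

lemma pk_succ (z : ℂ) (k : ℕ) : pk z (k + 1) = pk z k * (z + k) := Finset.prod_range_succ _ _

lemma pk_succ' (z : ℂ) (k : ℕ) : pk z (k + 1) = z * pk (z + 1) k := by
  rw [pk, Finset.prod_range_succ', pk]
  rw [mul_comm]
  simp only [Nat.cast_zero, add_zero]
  congr 1
  refine Finset.prod_congr rfl fun j _ => by push_cast; ring

lemma pk_ne_zero {z : ℂ} (h : NonInt z) (k : ℕ) : pk z k ≠ 0 := by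
  induction k with
  | zero => simp [pk_zero]
  | succ n ih => rw [pk_succ]; exact mul_ne_zero ih (h.add_nat_ne_zero n)

lemma Gamma_pk {z : ℂ} (h : NonInt z) (k : ℕ) :
    Complex.Gamma (z + k) = Complex.Gamma z * pk z k := by
  induction k with
  | zero => simp [pk_zero]
  | succ n ih =>
    have h0 : z + n ≠ 0 := h.add_nat_ne_zero n
    have : z + ((n : ℂ) + 1) = (z + n) + 1 := by ring
    rw [show ((n + 1 : ℕ) : ℂ) = (n : ℂ) + 1 by push_cast; ring, this,
      Complex.Gamma_add_one _ h0, ih, pk_succ]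
    ring

lemma pk_reflect (k : ℕ) : ∀ z : ℂ, pk (z - k) k = (-1) ^ k * pk (1 - z) k := by
  induction k with
  | zero => intro z; simp [pk_zero]
  | succ n ih =>
    intro z
    have h1 : z - ((n : ℂ) + 1) = (z - 1) - n := by ring
    rw [show ((n + 1 : ℕ) : ℂ) = (n : ℂ) + 1 by push_cast; ring, pk_succ, h1, ih (z - 1),
      pk_succ' (1 - z) n]
    have : (1 : ℂ) - (z - 1) = (1 - z) + 1 := by ring
    rw [this]
    ring


/-- The normalized ₂F₁(a,b;c;1) term. -/
def sTerm (a b c : ℂ) (k : ℕ) : ℂ := pk a k * pk b k / (k.factorial * pk c k)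

lemma gammaSeq_eq_pk (z : ℂ) (n : ℕ) :
    Complex.GammaSeq z n = (n : ℂ) ^ z * n.factorial / pk z (n + 1) := rfl

lemma sTerm_key {a b c : ℂ} (ha : NonInt a) (hb : NonInt b) (hc : NonInt c) (n : ℕ) :
    sTerm a b c (n + 1) * (Complex.GammaSeq a n * Complex.GammaSeq b n) *
        (((n : ℂ) + 1) * (n : ℂ) ^ c)
      = Complex.GammaSeq c n * ((n : ℂ) ^ a * (n : ℂ) ^ b) := by
  have hfa : ((n+1).factorial : ℂ) ≠ 0 := Nat.cast_ne_zero.2 (Nat.factorial_ne_zero _)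
  have hf : ((n).factorial : ℂ) ≠ 0 := Nat.cast_ne_zero.2 (Nat.factorial_ne_zero _)
  rw [sTerm, gammaSeq_eq_pk, gammaSeq_eq_pk, gammaSeq_eq_pk]
  field_simp [pk_ne_zero ha, pk_ne_zero hb, pk_ne_zero hc, hfa]
  rw [Nat.factorial_succ]
  push_cast
  ring

lemma summable_norm_sTerm {a b : ℂ} (ha : NonInt a) (hb : NonInt b) (hab : NonInt (a + b))
    (N : ℕ) : Summable fun k : ℕ => ‖sTerm a b (a + b + N + 1) k‖ := by
  set c := a + b + (N : ℂ) + 1 with hcdef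
  have hc : NonInt c := by
    rw [hcdef, show a + b + (N:ℂ) + 1 = (a + b) + ((N+1 : ℕ) : ℂ) by push_cast; ring]
    exact hab.add_nat (N+1)
  have hGa := (Complex.GammaSeq_tendsto_Gamma a).norm
  have hGb := (Complex.GammaSeq_tendsto_Gamma b).norm
  have hGc := (Complex.GammaSeq_tendsto_Gamma c).norm
  have hpa : (0:ℝ) < ‖Complex.Gamma a‖ := norm_pos_iff.2 ha.gamma_ne_zero
  have hpb : (0:ℝ) < ‖Complex.Gamma b‖ := norm_pos_iff.2 hb.gamma_ne_zero
  have ea : ∀ᶠ n in atTop, ‖Complex.Gamma a‖/2 ≤ ‖Complex.GammaSeq a n‖ :=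
    hGa.eventually (eventually_ge_nhds (half_lt_self hpa))
  have eb : ∀ᶠ n in atTop, ‖Complex.Gamma b‖/2 ≤ ‖Complex.GammaSeq b n‖ :=
    hGb.eventually (eventually_ge_nhds (half_lt_self hpb))
  have ec : ∀ᶠ n in atTop, ‖Complex.GammaSeq c n‖ ≤ ‖Complex.Gamma c‖ + 1 :=
    hGc.eventually (eventually_le_nhds (lt_add_one _))
  set Ka := ‖Complex.Gamma a‖/2 with hKa
  set Kb := ‖Complex.Gamma b‖/2 with hKb
  set C : ℝ := (‖Complex.Gamma c‖ + 1) * 2 / (Ka * Kb) with hC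
  have key : ∀ᶠ n in atTop, ‖sTerm a b c (n+1)‖ ≤ C * (1 / ((n:ℝ)+1)^2) := by
    filter_upwards [ea, eb, ec, eventually_ge_atTop 1] with n hna hnb hnc hn1
    have hnp : (0:ℝ) < (n:ℝ) := by exact_mod_cast hn1
    have hkey := sTerm_key ha hb hc n
    have hnorm := congrArg (fun z : ℂ => ‖z‖) hkey
    simp only [norm_mul] at hnorm
    simp only [← Complex.ofReal_natCast] at hnorm
    simp only [Complex.norm_cpow_eq_rpow_re_of_pos hnp] at hnorm
    have hcre : c.re = a.re + b.re + ((N:ℝ) + 1) := by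
      rw [hcdef]; simp [Complex.add_re]; ring
    rw [hcre, Real.rpow_add hnp, Real.rpow_add hnp] at hnorm
    have hra : (0:ℝ) < (n:ℝ) ^ a.re := Real.rpow_pos_of_pos hnp _
    have hrb : (0:ℝ) < (n:ℝ) ^ b.re := Real.rpow_pos_of_pos hnp _
    have hrN : (0:ℝ) < (n:ℝ) ^ ((N:ℝ)+1) := Real.rpow_pos_of_pos hnp _
    have hn1' : (0:ℝ) < (n:ℝ) + 1 := by linarith
    have hone : ‖((n:ℝ):ℂ)+1‖ = (n:ℝ)+1 := by
      rw [← Complex.ofReal_one, ← Complex.ofReal_add, Complex.norm_real,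
        Real.norm_of_nonneg (by positivity)]
    rw [hone] at hnorm
    -- cancel the positive factors (n^a.re * n^b.re)
    have hX : ‖sTerm a b c (n+1)‖ * (‖Complex.GammaSeq a n‖ * ‖Complex.GammaSeq b n‖ *
        (((n:ℝ)+1) * (n:ℝ) ^ ((N:ℝ)+1))) = ‖Complex.GammaSeq c n‖ := by
      have h2 := hnorm
      field_simp at h2 ⊢
      nlinarith [h2, mul_pos hra hrb]
    have hKapos : (0:ℝ) < Ka := by positivity
    have hKbpos : (0:ℝ) < Kb := by positivity
    have hdenom : Ka * Kb * (((n:ℝ)+1)^2 / 2) ≤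
        ‖Complex.GammaSeq a n‖ * ‖Complex.GammaSeq b n‖ * (((n:ℝ)+1) * (n:ℝ) ^ ((N:ℝ)+1)) := by
      have hn_le : (n:ℝ) ≤ (n:ℝ) ^ ((N:ℝ)+1) := by
        calc (n:ℝ) = (n:ℝ) ^ (1:ℝ) := (Real.rpow_one _).symm
        _ ≤ (n:ℝ) ^ ((N:ℝ)+1) := by
            apply Real.rpow_le_rpow_of_exponent_le
            · exact_mod_cast hn1
            · have : (0:ℝ) ≤ (N:ℝ) := Nat.cast_nonneg N
              linarith
      have hn1r : (1:ℝ) ≤ (n:ℝ) := by exact_mod_cast hn1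
      have h3 : ((n:ℝ)+1)^2/2 ≤ ((n:ℝ)+1) * (n:ℝ) ^ ((N:ℝ)+1) := by nlinarith [hn_le, hn1r, hn1']
      have h4 : Ka * Kb ≤ ‖Complex.GammaSeq a n‖ * ‖Complex.GammaSeq b n‖ :=
        mul_le_mul hna hnb hKbpos.le (le_trans hKapos.le hna)
      have := mul_le_mul h4 h3 (by positivity) (by positivity)
      linarith [this]
    have hdpos : (0:ℝ) < Ka * Kb * (((n:ℝ)+1)^2/2) := by positivity
    have hX2 : ‖sTerm a b c (n+1)‖ ≤ (‖Complex.Gamma c‖ + 1) / (Ka * Kb * (((n:ℝ)+1)^2/2)) := by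
      rw [← hX] at hnc
      have h5 : ‖sTerm a b c (n+1)‖ * (Ka * Kb * (((n:ℝ)+1)^2/2)) ≤ ‖Complex.Gamma c‖ + 1 :=
        le_trans (mul_le_mul_of_nonneg_left hdenom (norm_nonneg _)) hnc
      exact (le_div_iff₀ hdpos).2 h5
    calc ‖sTerm a b c (n+1)‖ ≤ (‖Complex.Gamma c‖ + 1) / (Ka * Kb * (((n:ℝ)+1)^2/2)) := hX2
    _ = C * (1 / ((n:ℝ)+1)^2) := by rw [hC]; field_simp; try ring
  have key' : ∀ᶠ m in atTop, ‖sTerm a b c m‖ ≤ C * (1/(m:ℝ)^2) := by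
    obtain ⟨M, hM⟩ := eventually_atTop.1 key
    refine eventually_atTop.2 ⟨M+1, fun m hm => ?_⟩
    obtain ⟨n, rfl⟩ : ∃ n, m = n + 1 := ⟨m-1, by omega⟩
    have := hM n (by omega)
    have hcast : ((n+1 : ℕ) : ℝ) = (n:ℝ) + 1 := by push_cast; ring
    rw [hcast]
    exact this
  apply summable_of_isBigO_nat ((Real.summable_one_div_nat_pow).2 one_lt_two)
  apply Asymptotics.IsBigO.of_bound C
  filter_upwards [key'] with m hm
  rw [Real.norm_of_nonneg (norm_nonneg _), Real.norm_of_nonneg (by positivity)]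
  exact hm

/-- telescoping witness for the base case. -/
def wfun (a b : ℂ) (k : ℕ) : ℂ :=
  pk a k * pk b k * k * (a + b + k) / (k.factorial * (a + b) * pk (a + b + 1) k)

lemma wfun_zero (a b : ℂ) : wfun a b 0 = 0 := by simp [wfun]

lemma telescope {a b : ℂ} (ha0 : a ≠ 0) (hb0 : b ≠ 0) (hab : NonInt (a + b)) (k : ℕ) :
    sTerm a b (a + b + 1) k = ((a + b) / (a * b)) * (wfun a b (k + 1) - wfun a b k) := by
  have hf : ((k).factorial : ℂ) ≠ 0 := Nat.cast_ne_zero.2 (Nat.factorial_ne_zero _)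
  have hP : pk (a + b + 1) k ≠ 0 := pk_ne_zero hab.add_one k
  have hab0 : a + b ≠ 0 := hab.ne_zero
  have habk : a + b + 1 + k ≠ 0 := by
    have := hab.add_nat_ne_zero (k + 1); push_cast at this
    intro h; apply this; rw [← h]; ring
  have habk' : a + b + (k:ℂ) ≠ 0 := hab.add_nat_ne_zero k
  have hk1 : ((k:ℂ)+1) ≠ 0 := by
    have : ((k+1:ℕ):ℂ) ≠ 0 := Nat.cast_ne_zero.2 (Nat.succ_ne_zero k)
    push_cast at this; exact this
  rw [sTerm, wfun, wfun, pk_succ a, pk_succ b, pk_succ (a+b+1), Nat.factorial_succ]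
  push_cast
  rw [div_sub_div _ _ (by apply_rules [mul_ne_zero, hk1, hf, hab0, hP, habk, ha0, hb0])
      (by apply_rules [mul_ne_zero, hk1, hf, hab0, hP, habk, ha0, hb0]),
    div_mul_div_comm,
    div_eq_div_iff (by apply_rules [mul_ne_zero, hk1, hf, hab0, hP, habk, ha0, hb0])
      (by apply_rules [mul_ne_zero, hk1, hf, hab0, hP, habk, ha0, hb0])]
  ring

lemma sum_sTerm_eq {a b : ℂ} (ha0 : a ≠ 0) (hb0 : b ≠ 0) (hab : NonInt (a + b)) (n : ℕ) :
    ∑ k ∈ Finset.range n, sTerm a b (a + b + 1) k = ((a + b) / (a * b)) * wfun a b n := by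
  calc ∑ k ∈ Finset.range n, sTerm a b (a + b + 1) k
      = ∑ k ∈ Finset.range n, ((a + b) / (a * b)) * (wfun a b (k + 1) - wfun a b k) :=
        Finset.sum_congr rfl fun k _ => telescope ha0 hb0 hab k
    _ = ((a + b) / (a * b)) * ∑ k ∈ Finset.range n, (wfun a b (k + 1) - wfun a b k) := by
        rw [Finset.mul_sum]
    _ = ((a + b) / (a * b)) * wfun a b n := by
        rw [Finset.sum_range_sub (f := wfun a b), wfun_zero, sub_zero]

lemma gammaSeq_ne_zero {z : ℂ} (h : NonInt z) {n : ℕ} (hn : 1 ≤ n) :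
    Complex.GammaSeq z n ≠ 0 := by
  rw [gammaSeq_eq_pk]
  have hn0 : (n : ℂ) ≠ 0 := Nat.cast_ne_zero.2 (by omega)
  have : (n : ℂ) ^ z ≠ 0 := fun h0 => hn0 ((Complex.cpow_eq_zero_iff _ _).1 h0).1
  exact div_ne_zero (mul_ne_zero this
    (Nat.cast_ne_zero.2 (Nat.factorial_ne_zero _))) (pk_ne_zero h _)

lemma wfun_eq_gammaSeq {a b : ℂ} (ha : NonInt a) (hb : NonInt b) (hab : NonInt (a + b))
    {n : ℕ} (hn : 1 ≤ n) :
    wfun a b (n + 1) = Complex.GammaSeq (a + b) n / (Complex.GammaSeq a n * Complex.GammaSeq b n) := by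
  have hn0 : (n : ℂ) ≠ 0 := Nat.cast_ne_zero.2 (by omega)
  have hcpow : (n : ℂ) ^ (a + b) = (n : ℂ) ^ a * (n : ℂ) ^ b := Complex.cpow_add _ _ hn0
  have hfn : ((n).factorial : ℂ) ≠ 0 := Nat.cast_ne_zero.2 (Nat.factorial_ne_zero _)
  have hP1 : pk (a + b + 1) (n + 1) = pk (a + b) (n + 1) * (a + b + ((n:ℂ) + 1)) / (a + b) := by
    rw [eq_div_iff hab.ne_zero]
    have h1 := pk_succ' (a + b) (n + 1)
    have h2 := pk_succ (a + b) (n + 1)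
    push_cast at h2
    linear_combination h2 - h1
  have hpa : pk a (n+1) ≠ 0 := pk_ne_zero ha _
  have hpb : pk b (n+1) ≠ 0 := pk_ne_zero hb _
  have hpab : pk (a+b) (n+1) ≠ 0 := pk_ne_zero hab _
  have hpab1 : pk (a+b+1) (n+1) ≠ 0 := pk_ne_zero hab.add_one _
  have habn : a + b + ((n:ℂ) + 1) ≠ 0 := by
    have := hab.add_nat_ne_zero (n+1); push_cast at this; exact this
  have hab0 : a + b ≠ 0 := hab.ne_zero
  have hca : (n : ℂ) ^ a ≠ 0 := fun h0 => hn0 ((Complex.cpow_eq_zero_iff _ _).1 h0).1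
  have hcb : (n : ℂ) ^ b ≠ 0 := fun h0 => hn0 ((Complex.cpow_eq_zero_iff _ _).1 h0).1
  have hk1 : ((n:ℂ)+1) ≠ 0 := by
    have : ((n+1:ℕ):ℂ) ≠ 0 := Nat.cast_ne_zero.2 (Nat.succ_ne_zero n)
    push_cast at this; exact this
  rw [wfun, hP1, gammaSeq_eq_pk, gammaSeq_eq_pk, gammaSeq_eq_pk, Nat.factorial_succ]
  push_cast
  rw [hcpow]
  field_simp [hpa, hpb, hpab, hab0, habn, hca, hcb, hfn, hk1]

lemma wfun_tendsto {a b : ℂ} (ha : NonInt a) (hb : NonInt b) (hab : NonInt (a + b)) :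
    Tendsto (wfun a b) atTop
      (𝓝 (Complex.Gamma (a + b) / (Complex.Gamma a * Complex.Gamma b))) := by
  have h1 : Tendsto (fun n : ℕ => Complex.GammaSeq (a + b) n /
      (Complex.GammaSeq a n * Complex.GammaSeq b n)) atTop
      (𝓝 (Complex.Gamma (a + b) / (Complex.Gamma a * Complex.Gamma b))) :=
    (Complex.GammaSeq_tendsto_Gamma (a + b)).div
      ((Complex.GammaSeq_tendsto_Gamma a).mul (Complex.GammaSeq_tendsto_Gamma b))
      (mul_ne_zero ha.gamma_ne_zero hb.gamma_ne_zero)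
  have h2 : Tendsto (fun n : ℕ => wfun a b (n + 1)) atTop
      (𝓝 (Complex.Gamma (a + b) / (Complex.Gamma a * Complex.Gamma b))) := by
    apply h1.congr'
    filter_upwards [eventually_ge_atTop 1] with n hn
    exact (wfun_eq_gammaSeq ha hb hab hn).symm
  exact (Filter.tendsto_add_atTop_iff_nat 1).1 h2

lemma gauss_base {a b : ℂ} (ha : NonInt a) (hb : NonInt b) (hab : NonInt (a + b)) :
    ∑' k : ℕ, sTerm a b (a + b + 1) k
      = Complex.Gamma (a + b + 1) / (Complex.Gamma (a + 1) * Complex.Gamma (b + 1)) := by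
  have hsum : Summable fun k : ℕ => ‖sTerm a b (a + b + 1) k‖ := by
    have := summable_norm_sTerm ha hb hab 0
    simpa using this
  have hS : Summable (sTerm a b (a + b + 1)) := hsum.of_norm
  have hlim := hS.hasSum.tendsto_sum_nat
  have hlim2 : Tendsto (fun n => ∑ k ∈ Finset.range n, sTerm a b (a + b + 1) k) atTop
      (𝓝 (((a + b) / (a * b)) * (Complex.Gamma (a + b) / (Complex.Gamma a * Complex.Gamma b)))) := by
    simp only [sum_sTerm_eq ha.ne_zero hb.ne_zero hab]
    exact (wfun_tendsto ha hb hab).const_mul _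
  rw [tendsto_nhds_unique hlim hlim2]
  rw [Complex.Gamma_add_one _ ha.ne_zero, Complex.Gamma_add_one _ hb.ne_zero,
    show a + b + 1 = (a + b) + 1 from rfl, Complex.Gamma_add_one _ hab.ne_zero]
  have h1 := ha.gamma_ne_zero
  have h2 := hb.gamma_ne_zero
  field_simp [ha.ne_zero, hb.ne_zero]

lemma stepAlg {a b c : ℂ} (hc : NonInt c) (k : ℕ) :
    sTerm (a + 1) b c (k + 1) - sTerm a b c (k + 1)
      = (b / c) * sTerm (a + 1) (b + 1) (c + 1) k := by
  have hf : ((k).factorial : ℂ) ≠ 0 := Nat.cast_ne_zero.2 (Nat.factorial_ne_zero _)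
  have hk1 : ((k : ℂ) + 1) ≠ 0 := by
    have : ((k + 1 : ℕ) : ℂ) ≠ 0 := Nat.cast_ne_zero.2 (Nat.succ_ne_zero k)
    push_cast at this; exact this
  have hP : pk (c + 1) k ≠ 0 := pk_ne_zero hc.add_one k
  have hc0 : c ≠ 0 := hc.ne_zero
  rw [sTerm, sTerm, sTerm, pk_succ (a + 1), pk_succ' a, pk_succ' b, pk_succ' c,
    Nat.factorial_succ]
  push_cast
  rw [div_sub_div _ _ (by apply_rules [mul_ne_zero, hk1, hf, hc0, hP])
      (by apply_rules [mul_ne_zero, hk1, hf, hc0, hP]),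
    div_mul_div_comm,
    div_eq_div_iff (by apply_rules [mul_ne_zero, hk1, hf, hc0, hP])
      (by apply_rules [mul_ne_zero, hk1, hf, hc0, hP])]
  ring

lemma gauss : ∀ (N : ℕ) (a b : ℂ), NonInt a → NonInt b → NonInt (a + b) →
    ∑' k : ℕ, sTerm a b (a + b + N + 1) k
      = Complex.Gamma (a + b + N + 1) * (N.factorial : ℂ) /
        (Complex.Gamma (a + N + 1) * Complex.Gamma (b + N + 1)) := by
  intro N
  induction N with
  | zero =>
    intro a b ha hb hab
    simpa using gauss_base ha hb hab
  | succ N IH =>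
    intro a b ha hb hab
    have hab1 : NonInt (a + 1 + b) := by
      have := hab.add_one
      intro n hn; exact this n (by rw [← hn]; ring)
    have hab2 : NonInt (a + 1 + (b + 1)) := by
      have := (hab.add_one).add_one
      intro n hn; exact this n (by rw [← hn]; ring)
    set c : ℂ := a + b + (N : ℂ) + 2 with hc
    have hcN : NonInt c := by
      have := hab.add_nat (N + 2)
      intro n hn
      exact this n (by rw [← hn, hc]; push_cast; ring)
    have hc1 : a + 1 + b + (N : ℂ) + 1 = c := by rw [hc]; ring
    have hc2 : a + 1 + (b + 1) + (N : ℂ) + 1 = c + 1 := by rw [hc]; ring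
    -- summabilities
    have hsum1 : Summable (sTerm (a + 1) b c) := by
      have := (summable_norm_sTerm ha.add_one hb hab1 N).of_norm
      rwa [hc1] at this
    have hsum2 : Summable (sTerm (a + 1) (b + 1) (c + 1)) := by
      have := (summable_norm_sTerm ha.add_one hb.add_one hab2 N).of_norm
      rwa [hc2] at this
    -- the difference sequence
    set g : ℕ → ℂ := fun k => sTerm (a + 1) b c k - sTerm a b c k with hg
    have hg0 : g 0 = 0 := by simp [hg, sTerm, pk_zero]
    have hgs : ∀ k, g (k + 1) = (b / c) * sTerm (a + 1) (b + 1) (c + 1) k :=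
      fun k => stepAlg hcN k
    have hgsum : Summable g := by
      rw [← summable_nat_add_iff 1]
      exact ((hsum2.mul_left (b / c)).congr fun k => (hgs k).symm)
    have htg : ∑' k, g k = (b / c) * ∑' k, sTerm (a + 1) (b + 1) (c + 1) k := by
      rw [Summable.tsum_eq_zero_add hgsum, hg0, zero_add]
      rw [tsum_congr hgs, tsum_mul_left]
    -- main splitting
    have hmain : ∑' k, sTerm a b (a + b + ((N + 1 : ℕ) : ℂ) + 1) k
        = ∑' k, sTerm (a + 1) b c k - ∑' k, g k := by
      rw [show a + b + ((N + 1 : ℕ) : ℂ) + 1 = c by rw [hc]; push_cast; ring]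
      rw [← Summable.tsum_sub hsum1 hgsum]
      exact tsum_congr fun k => by rw [hg]; ring
    rw [hmain, htg]
    have hv1 := IH (a + 1) b ha.add_one hb hab1
    have hv2 := IH (a + 1) (b + 1) ha.add_one hb.add_one hab2
    rw [hc1] at hv1
    rw [hc2] at hv2
    rw [hv1, hv2]
    -- numeric identity
    have e1 : Complex.Gamma (c + 1) = c * Complex.Gamma c := Complex.Gamma_add_one _ hcN.ne_zero
    have e2 : Complex.Gamma (b + 1 + (N : ℂ) + 1) = (b + (N : ℂ) + 1) * Complex.Gamma (b + (N : ℂ) + 1) := by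
      rw [show b + 1 + (N : ℂ) + 1 = (b + (N : ℂ) + 1) + 1 by ring]
      exact Complex.Gamma_add_one _ (by
        have := hb.add_nat (N + 1)
        intro h0; exact this.ne_zero (by rw [← h0]; push_cast; ring))
    have e3 : a + b + ((N + 1 : ℕ) : ℂ) + 1 = c := by rw [hc]; push_cast; ring
    have e4 : a + ((N + 1 : ℕ) : ℂ) + 1 = a + 1 + (N : ℂ) + 1 := by push_cast; ring
    have e5 : b + ((N + 1 : ℕ) : ℂ) + 1 = b + 1 + (N : ℂ) + 1 := by push_cast; ring
    rw [e3, e4, e5, e1, e2]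
    have hg1 : Complex.Gamma c ≠ 0 := hcN.gamma_ne_zero
    have hg2 : Complex.Gamma (a + 1 + (N : ℂ) + 1) ≠ 0 := by
      have : NonInt (a + 1 + (N : ℂ) + 1) := by
        have := ha.add_nat (N + 2)
        intro n hn; exact this n (by rw [← hn]; push_cast; ring)
      exact this.gamma_ne_zero
    have hg3 : Complex.Gamma (b + (N : ℂ) + 1) ≠ 0 := by
      have : NonInt (b + (N : ℂ) + 1) := by
        have := hb.add_nat (N + 1)
        intro n hn; exact this n (by rw [← hn]; push_cast; ring)
      exact this.gamma_ne_zero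
    have hbN : (b + (N : ℂ) + 1) ≠ 0 := by
      have := hb.add_nat (N + 1)
      intro h0; exact this.ne_zero (by rw [← h0]; push_cast; ring)
    have hfN : ((N).factorial : ℂ) ≠ 0 := Nat.cast_ne_zero.2 (Nat.factorial_ne_zero _)
    rw [Nat.factorial_succ]
    push_cast
    rw [div_mul_div_comm,
      div_sub_div _ _ (by apply_rules [mul_ne_zero, hg2, hg3, hbN])
        (by apply_rules [mul_ne_zero, hg2, hg3, hbN, hcN.ne_zero]),
      div_eq_div_iff (by apply_rules [mul_ne_zero, hg2, hg3, hbN, hcN.ne_zero])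
        (by apply_rules [mul_ne_zero, hg2, hg3, hbN])]
    ring

/-- reflection for Gamma at negatively shifted arguments -/
lemma Gamma_reflect_pk {z : ℂ} (h : NonInt z) (k : ℕ) :
    Complex.Gamma (z - k) = Complex.Gamma z / ((-1) ^ k * pk (1 - z) k) := by
  have hzk : NonInt (z - (k : ℂ)) := by
    have := h.add_int (-(k : ℤ))
    intro n hn; exact this n (by rw [← hn]; push_cast; ring)
  have h1 := Gamma_pk hzk k
  rw [show z - (k : ℂ) + (k : ℂ) = z by ring] at h1
  rw [pk_reflect k z] at h1
  rw [eq_div_iff (mul_ne_zero (pow_ne_zero _ (show (-1:ℂ) ≠ 0 by norm_num)) (pk_ne_zero (by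
    have := (h.neg).add_int 1
    intro n hn; exact this n (by rw [← hn]; push_cast; ring)) k))]
  linear_combination -h1


/-- The `k1`-th term of the residue series (Ca1). -/
def termCa1 (μ1 μ2 : ℂ) (k2 k3 k4 k1 : ℕ) : ℂ :=
  ((-1 : ℂ) ^ k1 / (Nat.factorial k1 : ℂ)) *
    Complex.Gamma (μ1 - (k1 : ℂ)) *
    Complex.Gamma ((-μ1 - μ2) / 2 + (k1 : ℂ) + (k2 : ℂ) - (k3 : ℂ)) *
    Complex.Gamma ((-μ1 + μ2) / 2 + (k1 : ℂ) - (k2 : ℂ) - (k4 : ℂ))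

/-- The `k1`-th term of the residue series (Ca2). -/
def termCa2 (μ1 μ2 : ℂ) (k2 k3 k4 k1 : ℕ) : ℂ :=
  ((-1 : ℂ) ^ k1 / (Nat.factorial k1 : ℂ)) *
    Complex.Gamma (-μ1 - (k1 : ℂ)) *
    Complex.Gamma ((μ1 - μ2) / 2 + (k1 : ℂ) + (k2 : ℂ) - (k3 : ℂ)) *
    Complex.Gamma ((μ1 + μ2) / 2 + (k1 : ℂ) - (k2 : ℂ) - (k4 : ℂ))


/-- the key Gamma-series cancellation underlying Lemma 4.2. -/
theorem gamma_series_cancellation (μ1 μ2 : ℂ)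
    (h1 : ∀ n : ℤ, μ1 ≠ (n : ℂ))
    (h2 : ∀ n : ℤ, (μ1 + μ2) / 2 ≠ (n : ℂ))
    (h3 : ∀ n : ℤ, (μ1 - μ2) / 2 ≠ (n : ℂ))
    (k2 k3 k4 : ℕ) :
    (Summable fun k1 : ℕ => ‖termCa1 μ1 μ2 k2 k3 k4 k1‖) ∧
    (Summable fun k1 : ℕ => ‖termCa2 μ1 μ2 k2 k3 k4 k1‖) ∧
    (∑' k1 : ℕ, (termCa1 μ1 μ2 k2 k3 k4 k1 + termCa2 μ1 μ2 k2 k3 k4 k1)) = 0 := by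
  have hμ : NonInt μ1 := h1
  have hP : NonInt ((μ1 + μ2) / 2) := h2
  have hM : NonInt ((μ1 - μ2) / 2) := h3
  set A : ℂ := (-μ1 - μ2) / 2 + (k2 : ℂ) - (k3 : ℂ) with hAdef
  set B : ℂ := (-μ1 + μ2) / 2 - (k2 : ℂ) - (k4 : ℂ) with hBdef
  set A' : ℂ := (μ1 - μ2) / 2 + (k2 : ℂ) - (k3 : ℂ) with hA'def
  set B' : ℂ := (μ1 + μ2) / 2 - (k2 : ℂ) - (k4 : ℂ) with hB'def
  set N : ℕ := k3 + k4 with hNdef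
  have hA : NonInt A := by
    have := hP.neg.add_int ((k2 : ℤ) - k3)
    intro n hn; exact this n (by rw [← hn, hAdef]; push_cast; ring)
  have hB : NonInt B := by
    have := hM.neg.add_int (-(k2 : ℤ) - k4)
    intro n hn; exact this n (by rw [← hn, hBdef]; push_cast; ring)
  have hAB : NonInt (A + B) := by
    have := hμ.neg.add_int (-(k3 : ℤ) - k4)
    intro n hn; exact this n (by rw [← hn, hAdef, hBdef]; push_cast; ring)
  have hA' : NonInt A' := by
    have := hM.add_int ((k2 : ℤ) - k3)
    intro n hn; exact this n (by rw [← hn, hA'def]; push_cast; ring)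
  have hB' : NonInt B' := by
    have := hP.add_int (-(k2 : ℤ) - k4)
    intro n hn; exact this n (by rw [← hn, hB'def]; push_cast; ring)
  have hA'B' : NonInt (A' + B') := by
    have := hμ.add_int (-(k3 : ℤ) - k4)
    intro n hn; exact this n (by rw [← hn, hA'def, hB'def]; push_cast; ring)
  have hc1 : A + B + (N : ℂ) + 1 = 1 - μ1 := by
    rw [hAdef, hBdef, hNdef]; push_cast; ring
  have hc2 : A' + B' + (N : ℂ) + 1 = 1 + μ1 := by
    rw [hA'def, hB'def, hNdef]; push_cast; ring
  -- term rewriting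
  set C1 : ℂ := Complex.Gamma μ1 * Complex.Gamma A * Complex.Gamma B with hC1
  set C2 : ℂ := Complex.Gamma (-μ1) * Complex.Gamma A' * Complex.Gamma B' with hC2
  have hterm1 : ∀ k : ℕ, termCa1 μ1 μ2 k2 k3 k4 k = C1 * sTerm A B (1 - μ1) k := by
    intro k
    have e1 : (-μ1 - μ2) / 2 + (k : ℂ) + (k2 : ℂ) - (k3 : ℂ) = A + k := by
      rw [hAdef]; ring
    have e2 : (-μ1 + μ2) / 2 + (k : ℂ) - (k2 : ℂ) - (k4 : ℂ) = B + k := by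
      rw [hBdef]; ring
    have hpk1 : pk (1 - μ1) k ≠ 0 := pk_ne_zero (by
      have := hμ.neg.add_int 1
      intro n hn; exact this n (by rw [← hn]; push_cast; ring)) k
    have hfk : ((k).factorial : ℂ) ≠ 0 := Nat.cast_ne_zero.2 (Nat.factorial_ne_zero _)
    rw [termCa1, e1, e2, Gamma_pk hA, Gamma_pk hB, Gamma_reflect_pk hμ, sTerm, hC1]
    field_simp [hpk1, hfk, pow_ne_zero k (show (-1:ℂ) ≠ 0 by norm_num)]
  have hterm2 : ∀ k : ℕ, termCa2 μ1 μ2 k2 k3 k4 k = C2 * sTerm A' B' (1 + μ1) k := by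
    intro k
    have e1 : (μ1 - μ2) / 2 + (k : ℂ) + (k2 : ℂ) - (k3 : ℂ) = A' + k := by
      rw [hA'def]; ring
    have e2 : (μ1 + μ2) / 2 + (k : ℂ) - (k2 : ℂ) - (k4 : ℂ) = B' + k := by
      rw [hB'def]; ring
    have e3 : -μ1 - (k : ℂ) = -μ1 - (k : ℂ) := rfl
    have hpk1 : pk (1 + μ1) k ≠ 0 := pk_ne_zero (by
      have := hμ.add_int 1
      intro n hn; exact this n (by rw [← hn]; push_cast; ring)) k
    have hfk : ((k).factorial : ℂ) ≠ 0 := Nat.cast_ne_zero.2 (Nat.factorial_ne_zero _)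
    have hrefl : Complex.Gamma (-μ1 - (k:ℂ)) = Complex.Gamma (-μ1) / ((-1)^k * pk (1 + μ1) k) := by
      have := Gamma_reflect_pk hμ.neg k
      rwa [show (1 : ℂ) - -μ1 = 1 + μ1 by ring] at this
    rw [termCa2, e1, e2, Gamma_pk hA', Gamma_pk hB', hrefl, sTerm, hC2]
    field_simp [hpk1, hfk, pow_ne_zero k (show (-1:ℂ) ≠ 0 by norm_num)]
  -- summability
  have hsn1 : Summable fun k : ℕ => ‖sTerm A B (1 - μ1) k‖ := by
    have := summable_norm_sTerm hA hB hAB N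
    rwa [hc1] at this
  have hsn2 : Summable fun k : ℕ => ‖sTerm A' B' (1 + μ1) k‖ := by
    have := summable_norm_sTerm hA' hB' hA'B' N
    rwa [hc2] at this
  have hS1 : Summable (termCa1 μ1 μ2 k2 k3 k4) :=
    ((hsn1.of_norm.mul_left C1).congr fun k => (hterm1 k).symm)
  have hS2 : Summable (termCa2 μ1 μ2 k2 k3 k4) :=
    ((hsn2.of_norm.mul_left C2).congr fun k => (hterm2 k).symm)
  refine ⟨?_, ?_, ?_⟩
  · apply Summable.congr (hsn1.mul_left ‖C1‖)
    intro k
    rw [hterm1 k]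
    simp only [norm_mul]
  · apply Summable.congr (hsn2.mul_left ‖C2‖)
    intro k
    rw [hterm2 k]
    simp only [norm_mul]
  · rw [Summable.tsum_add hS1 hS2]
    have hv1 : ∑' k : ℕ, termCa1 μ1 μ2 k2 k3 k4 k
        = C1 * (Complex.Gamma (1 - μ1) * (N.factorial : ℂ) /
          (Complex.Gamma (A + N + 1) * Complex.Gamma (B + N + 1))) := by
      rw [tsum_congr hterm1, tsum_mul_left]
      have := gauss N A B hA hB hAB
      rw [hc1] at this
      rw [this]
    have hv2 : ∑' k : ℕ, termCa2 μ1 μ2 k2 k3 k4 k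
        = C2 * (Complex.Gamma (1 + μ1) * (N.factorial : ℂ) /
          (Complex.Gamma (A' + N + 1) * Complex.Gamma (B' + N + 1))) := by
      rw [tsum_congr hterm2, tsum_mul_left]
      have := gauss N A' B' hA' hB' hA'B'
      rw [hc2] at this
      rw [this]
    rw [hv1, hv2, hC1, hC2]
    -- final algebraic cancellation
    have hGA : Complex.Gamma (A + (N : ℂ) + 1) = Complex.Gamma A * pk A (N + 1) := by
      rw [show A + (N : ℂ) + 1 = A + ((N + 1 : ℕ) : ℂ) by push_cast; ring]
      exact Gamma_pk hA (N + 1)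
    have hGB : Complex.Gamma (B + (N : ℂ) + 1) = Complex.Gamma B * pk B (N + 1) := by
      rw [show B + (N : ℂ) + 1 = B + ((N + 1 : ℕ) : ℂ) by push_cast; ring]
      exact Gamma_pk hB (N + 1)
    have hGA' : Complex.Gamma (A' + (N : ℂ) + 1) = Complex.Gamma A' * pk A' (N + 1) := by
      rw [show A' + (N : ℂ) + 1 = A' + ((N + 1 : ℕ) : ℂ) by push_cast; ring]
      exact Gamma_pk hA' (N + 1)
    have hGB' : Complex.Gamma (B' + (N : ℂ) + 1) = Complex.Gamma B' * pk B' (N + 1) := by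
      rw [show B' + (N : ℂ) + 1 = B' + ((N + 1 : ℕ) : ℂ) by push_cast; ring]
      exact Gamma_pk hB' (N + 1)
    have hrefl1 : pk A' (N + 1) = (-1) ^ (N + 1) * pk B (N + 1) := by
      have := pk_reflect (N + 1) (1 - B)
      rw [show (1 : ℂ) - B - ((N + 1 : ℕ) : ℂ) = A' by
          rw [hA'def, hBdef, hNdef]; push_cast; ring,
        show (1 : ℂ) - (1 - B) = B by ring] at this
      exact this
    have hrefl2 : pk B' (N + 1) = (-1) ^ (N + 1) * pk A (N + 1) := by
      have := pk_reflect (N + 1) (1 - A)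
      rw [show (1 : ℂ) - A - ((N + 1 : ℕ) : ℂ) = B' by
          rw [hB'def, hAdef, hNdef]; push_cast; ring,
        show (1 : ℂ) - (1 - A) = A by ring] at this
      exact this
    have hg1 : Complex.Gamma (1 + μ1) = μ1 * Complex.Gamma μ1 := by
      rw [show (1 : ℂ) + μ1 = μ1 + 1 by ring]
      exact Complex.Gamma_add_one _ hμ.ne_zero
    have hg2 : Complex.Gamma (1 - μ1) = -μ1 * Complex.Gamma (-μ1) := by
      rw [show (1 : ℂ) - μ1 = -μ1 + 1 by ring]
      exact Complex.Gamma_add_one _ hμ.neg.ne_zero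
    have hsq : ((-1 : ℂ)) ^ (N + 1) * (-1) ^ (N + 1) = 1 := by
      rw [← pow_add, show (N + 1) + (N + 1) = 2 * (N + 1) by ring, pow_mul]
      norm_num
    rw [hGA, hGB, hGA', hGB', hrefl1, hrefl2, hg1, hg2]
    have hpkA : pk A (N + 1) ≠ 0 := pk_ne_zero hA _
    have hpkB : pk B (N + 1) ≠ 0 := pk_ne_zero hB _
    have hD1 : Complex.Gamma A * pk A (N + 1) * (Complex.Gamma B * pk B (N + 1)) ≠ 0 :=
      mul_ne_zero (mul_ne_zero hA.gamma_ne_zero hpkA) (mul_ne_zero hB.gamma_ne_zero hpkB)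
    have hD2 : Complex.Gamma A' * ((-1 : ℂ) ^ (N + 1) * pk B (N + 1)) *
        (Complex.Gamma B' * ((-1 : ℂ) ^ (N + 1) * pk A (N + 1))) ≠ 0 :=
      mul_ne_zero (mul_ne_zero hA'.gamma_ne_zero
        (mul_ne_zero (pow_ne_zero _ (show (-1:ℂ) ≠ 0 by norm_num)) hpkB))
        (mul_ne_zero hB'.gamma_ne_zero
          (mul_ne_zero (pow_ne_zero _ (show (-1:ℂ) ≠ 0 by norm_num)) hpkA))
    rw [mul_div_assoc', mul_div_assoc', div_add_div _ _ hD1 hD2, div_eq_zero_iff]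
    left
    linear_combination (Complex.Gamma μ1 * Complex.Gamma A * Complex.Gamma B * (-μ1) *
      Complex.Gamma (-μ1) * (N.factorial : ℂ) * Complex.Gamma A' * Complex.Gamma B' *
      pk A (N + 1) * pk B (N + 1)) * hsq

end
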